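/- arXiv:cond-mat/0304020 — 6 statements merged into one kernel-verified Lean document; each statement's English description precedes it below -/
import Mathlib

section
/- For all a > 0, ∫₀^∞ e^{-y}/(1+ay) dy ≤ a^{-1} log(1+a). -/
open MeasureTheory Real Set

/-- Change of variables: the integral equals an integral over `Ioo 0 1`. -/
lemma cov_step (a : ℝ) (ha : 0 < a) :
    ∫ y in Set.Ioi (0 : ℝ), Real.exp (-y) / (1 + a * y)
      = ∫ t in Set.Ioo (0 : ℝ) 1, 1 / (1 - a * Real.log (1 - t)) := by
  have himg : (fun t : ℝ => -Real.log (1 - t)) '' Set.Ioo 0 1 = Set.Ioi 0 := by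
    ext y
    constructor
    · rintro ⟨t, ⟨ht0, ht1⟩, rfl⟩
      have h1 : (0:ℝ) < 1 - t := by linarith
      have : Real.log (1 - t) < 0 := Real.log_neg h1 (by linarith)
      simpa using this
    · intro hy
      simp only [Set.mem_Ioi] at hy
      refine ⟨1 - Real.exp (-y), ⟨?_, ?_⟩, ?_⟩
      · have := Real.exp_lt_one_iff.mpr (by linarith : -y < 0)
        linarith
      · have := Real.exp_pos (-y); linarith
      · simp [Real.log_exp]
  have hderiv : ∀ t ∈ Set.Ioo (0:ℝ) 1,
      HasDerivWithinAt (fun t : ℝ => -Real.log (1 - t)) ((1 - t)⁻¹) (Set.Ioo 0 1) t := by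
    intro t ht
    have h1 : (1:ℝ) - t ≠ 0 := by have := ht.2; intro h; linarith [ht.2]
    have : HasDerivAt (fun t : ℝ => -Real.log (1 - t)) ((1 - t)⁻¹) t := by
      have h2 : HasDerivAt (fun t : ℝ => 1 - t) (-1) t := by
        simpa using (hasDerivAt_id t).const_sub 1
      have := (Real.hasDerivAt_log h1).comp t h2
      refine this.neg.congr_deriv ?_
      ring
    exact this.hasDerivWithinAt
  have hinj : Set.InjOn (fun t : ℝ => -Real.log (1 - t)) (Set.Ioo 0 1) := by
    intro s hs t ht h
    have hs1 : (0:ℝ) < 1 - s := by linarith [hs.2]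
    have ht1 : (0:ℝ) < 1 - t := by linarith [ht.2]
    have : Real.log (1 - s) = Real.log (1 - t) := by linarith [neg_injective h]
    have := Real.log_injOn_pos (by simp [hs1] : (1:ℝ)-s ∈ Set.Ioi 0)
      (by simp [ht1] : (1:ℝ)-t ∈ Set.Ioi 0) this
    linarith
  rw [← himg, MeasureTheory.integral_image_eq_integral_abs_deriv_smul
    measurableSet_Ioo hderiv hinj]
  refine setIntegral_congr_fun measurableSet_Ioo fun t ht => ?_
  have h1 : (0:ℝ) < 1 - t := by linarith [ht.2]
  have hlog : Real.log (1 - t) ≤ 0 := Real.log_nonpos (by linarith) (by linarith [ht.1])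
  have hd : (0:ℝ) < 1 - a * Real.log (1 - t) := by nlinarith
  simp only [smul_eq_mul, neg_neg, Real.exp_log h1, abs_of_pos (inv_pos.mpr h1)]
  rw [show (1:ℝ) + a * -Real.log (1 - t) = 1 - a * Real.log (1 - t) by ring]
  field_simp

theorem integral_exp_div_one_add_mul_le (a : ℝ) (ha : 0 < a) :
    ∫ y in Set.Ioi (0 : ℝ), Real.exp (-y) / (1 + a * y) ≤ a⁻¹ * Real.log (1 + a) := by
  rw [cov_step a ha]
  have key : ∫ t in Set.Ioo (0:ℝ) 1, 1 / (1 - a * Real.log (1 - t))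
      ≤ ∫ t in Set.Ioo (0:ℝ) 1, (1 + a * t)⁻¹ := by
    apply setIntegral_mono_on
    · apply MeasureTheory.Measure.integrableOn_of_bounded (M := 1)
      · exact measure_Ioo_lt_top.ne
      · have hm : Measurable fun t : ℝ => 1 - a * Real.log (1 - t) :=
          (Real.measurable_log.comp (measurable_const.sub measurable_id)).const_mul a
            |>.const_sub 1
        exact (measurable_const.div hm).aestronglyMeasurable
      · rw [MeasureTheory.ae_restrict_iff' measurableSet_Ioo]
        filter_upwards with t ht
        have h1 : (0:ℝ) < 1 - t := by linarith [ht.2]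
        have hlog : Real.log (1 - t) ≤ 0 := Real.log_nonpos (by linarith) (by linarith [ht.1])
        have hd : (1:ℝ) ≤ 1 - a * Real.log (1 - t) := by nlinarith
        rw [Real.norm_eq_abs, abs_of_nonneg (by positivity)]
        rw [div_le_one (by linarith)]
        exact hd
    · apply MeasureTheory.IntegrableOn.mono_set _ Set.Ioo_subset_Icc_self
      apply ContinuousOn.integrableOn_Icc
      apply ContinuousOn.inv₀ (by fun_prop)
      intro t ht
      nlinarith [ht.1, ht.2]
    · exact measurableSet_Ioo
    · intro t ht
      have h1 : (0:ℝ) < 1 - t := by linarith [ht.2]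
      have hlog : Real.log (1 - t) ≤ -t := by
        have := Real.log_le_sub_one_of_pos h1
        linarith
      have hpos : (0:ℝ) < 1 + a * t := by nlinarith [ht.1]
      rw [one_div]
      apply inv_anti₀ hpos
      nlinarith
  refine key.trans ?_
  have h2 : ∫ t in Set.Ioo (0:ℝ) 1, (1 + a * t)⁻¹
      = ∫ t in (0:ℝ)..1, (1 + a * t)⁻¹ := by
    rw [intervalIntegral.integral_of_le (by norm_num : (0:ℝ) ≤ 1),
      MeasureTheory.integral_Ioc_eq_integral_Ioo]
  rw [h2]
  have hF : ∀ t ∈ Set.uIcc (0:ℝ) 1,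
      HasDerivAt (fun t => a⁻¹ * Real.log (1 + a * t)) ((1 + a * t)⁻¹) t := by
    intro t ht
    rw [Set.uIcc_of_le (by norm_num : (0:ℝ) ≤ 1)] at ht
    have hpos : (0:ℝ) < 1 + a * t := by nlinarith [ht.1, ht.2]
    have h2 : HasDerivAt (fun t : ℝ => 1 + a * t) a t := by
      simpa using (hasDerivAt_id t).const_mul a |>.const_add 1
    have := ((Real.hasDerivAt_log hpos.ne').comp t h2).const_mul a⁻¹
    refine this.congr_deriv ?_
    rw [mul_comm, mul_assoc, mul_inv_cancel₀ ha.ne', mul_one]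
  have hcont : ContinuousOn (fun t : ℝ => (1 + a * t)⁻¹) (Set.uIcc (0:ℝ) 1) := by
    apply ContinuousOn.inv₀ (by fun_prop)
    intro t ht
    rw [Set.uIcc_of_le (by norm_num : (0:ℝ) ≤ 1)] at ht
    nlinarith [ht.1, ht.2]
  rw [intervalIntegral.integral_eq_sub_of_hasDerivAt hF (hcont.intervalIntegrable)]
  simp
end

section
/- For all a, b > 0, |∫₀^∞ e^{-y}/(1+ay) dy − ∫₀^∞ e^{-y}/(1+by) dy| ≤ |b−a| / max{1, a, b}. -/
open MeasureTheory Real Set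

private lemma intg (c : ℝ) (hc : 0 ≤ c) :
    IntegrableOn (fun y => Real.exp (-y) / (1 + c * y)) (Ioi (0:ℝ)) := by
  have hpos : ∀ y ∈ Ioi (0:ℝ), 0 < 1 + c * y := by
    intro y hy
    have : 0 ≤ c * y := mul_nonneg hc (le_of_lt hy)
    linarith
  apply Integrable.mono' (g := fun y => Real.exp (-y))
  · have := exp_neg_integrableOn_Ioi (0:ℝ) (one_pos)
    simp at this
    exact this
  · apply ContinuousOn.aestronglyMeasurable _ measurableSet_Ioi
    exact ContinuousOn.div (Continuous.continuousOn (by continuity))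
      (Continuous.continuousOn (by continuity)) (fun y hy => (hpos y hy).ne')
  · filter_upwards [self_mem_ae_restrict measurableSet_Ioi] with y hy
    have h1 := hpos y hy
    rw [Real.norm_eq_abs, abs_of_nonneg (div_nonneg (exp_nonneg _) h1.le)]
    have h2 : 0 ≤ c * y := mul_nonneg hc (le_of_lt hy)
    exact div_le_self (exp_nonneg _) (by linarith)

private lemma yexp_eq :
    EqOn (fun x : ℝ => Real.exp (-x) * x ^ ((2:ℝ) - 1)) (fun y => y * Real.exp (-y))
      (Ioi (0:ℝ)) := by
  intro y hy
  simp only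
  rw [show (2:ℝ) - 1 = 1 by norm_num, Real.rpow_one]
  ring

private lemma intg_yexp : IntegrableOn (fun y => y * Real.exp (-y)) (Ioi (0:ℝ)) := by
  have := Real.GammaIntegral_convergent (s := 2) (by norm_num)
  exact this.congr_fun yexp_eq measurableSet_Ioi

private lemma int_yexp : (∫ y in Ioi (0:ℝ), y * Real.exp (-y)) = 1 := by
  have h := Real.Gamma_eq_integral (s := 2) (by norm_num)
  rw [Real.Gamma_two] at h
  exact (setIntegral_congr_fun measurableSet_Ioi yexp_eq).symm.trans h.symm

private lemma aux (a b : ℝ) (ha : 0 < a) (hab : a ≤ b) :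
    |(∫ y in Set.Ioi (0 : ℝ), Real.exp (-y) / (1 + a * y)) -
      ∫ y in Set.Ioi (0 : ℝ), Real.exp (-y) / (1 + b * y)| ≤ (b - a) / max 1 b := by
  have hb : 0 < b := lt_of_lt_of_le ha hab
  have hfa := intg a ha.le
  have hfb := intg b hb.le
  rw [← integral_sub hfa hfb]
  have habs := norm_integral_le_integral_norm
    (f := fun y => Real.exp (-y) / (1 + a * y) - Real.exp (-y) / (1 + b * y))
    (μ := volume.restrict (Ioi 0))
  simp only [Real.norm_eq_abs] at habs
  refine habs.trans ?_
  have hintabs : IntegrableOn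
      (fun y => |Real.exp (-y) / (1 + a * y) - Real.exp (-y) / (1 + b * y)|) (Ioi (0:ℝ)) :=
    (hfa.sub hfb).abs
  have hpt : ∀ y ∈ Ioi (0:ℝ),
      |Real.exp (-y) / (1 + a * y) - Real.exp (-y) / (1 + b * y)| =
        Real.exp (-y) * ((b - a) * y) / ((1 + a * y) * (1 + b * y)) := by
    intro y hy
    have hy0 : (0:ℝ) < y := hy
    have h1 : 0 < 1 + a * y := by nlinarith
    have h2 : 0 < 1 + b * y := by nlinarith
    rw [abs_of_nonneg]
    · field_simp
      ring
    · rw [sub_nonneg]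
      exact div_le_div_of_nonneg_left (exp_nonneg _) h1 (by nlinarith)
  rcases le_total b 1 with hb1 | hb1
  · -- max 1 b = 1, bound by (b-a) * (y * exp (-y))
    rw [max_eq_left hb1]
    have hmono : ∀ y ∈ Ioi (0:ℝ),
        |Real.exp (-y) / (1 + a * y) - Real.exp (-y) / (1 + b * y)| ≤
          (b - a) * (y * Real.exp (-y)) := by
      intro y hy
      have hy0 : (0:ℝ) < y := hy
      have h1 : 0 < 1 + a * y := by nlinarith
      have h2 : 0 < 1 + b * y := by nlinarith
      rw [hpt y hy]
      have hnum : 0 ≤ Real.exp (-y) * ((b - a) * y) :=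
        mul_nonneg (exp_nonneg _) (mul_nonneg (by linarith) hy0.le)
      calc Real.exp (-y) * ((b - a) * y) / ((1 + a * y) * (1 + b * y))
          ≤ Real.exp (-y) * ((b - a) * y) := div_le_self hnum (by nlinarith [mul_nonneg ha.le hy0.le, mul_nonneg hb.le hy0.le, mul_nonneg (mul_nonneg ha.le hb.le) (mul_nonneg hy0.le hy0.le)])
        _ = (b - a) * (y * Real.exp (-y)) := by ring
    have := setIntegral_mono_on hintabs (intg_yexp.const_mul (b - a)) measurableSet_Ioi hmono
    refine this.trans ?_
    rw [integral_const_mul, int_yexp]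
    rw [mul_one, div_one]
  · -- 1 ≤ b, so max 1 b = b, bound by ((b-a)/b) * exp(-y)
    rw [max_eq_right hb1]
    have hmono : ∀ y ∈ Ioi (0:ℝ),
        |Real.exp (-y) / (1 + a * y) - Real.exp (-y) / (1 + b * y)| ≤
          (b - a) / b * Real.exp (-y) := by
      intro y hy
      have hy0 : (0:ℝ) < y := hy
      have h1 : 0 < 1 + a * y := by nlinarith
      have h2 : 0 < 1 + b * y := by nlinarith
      rw [hpt y hy]
      have key : b * y ≤ (1 + a * y) * (1 + b * y) := by
        nlinarith [mul_nonneg ha.le hy0.le, mul_nonneg (mul_nonneg ha.le hb.le) (mul_nonneg hy0.le hy0.le)]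
      have hnum : 0 ≤ Real.exp (-y) * ((b - a) * y) :=
        mul_nonneg (exp_nonneg _) (mul_nonneg (by linarith) hy0.le)
      calc Real.exp (-y) * ((b - a) * y) / ((1 + a * y) * (1 + b * y))
          ≤ Real.exp (-y) * ((b - a) * y) / (b * y) :=
            div_le_div_of_nonneg_left hnum (by positivity) key
        _ = (b - a) / b * Real.exp (-y) := by field_simp
    have hintexp : IntegrableOn (fun y => (b - a) / b * Real.exp (-y)) (Ioi (0:ℝ)) := by
      apply Integrable.const_mul
      have := exp_neg_integrableOn_Ioi (0:ℝ) (one_pos)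
      simp at this
      exact this
    have := setIntegral_mono_on hintabs hintexp measurableSet_Ioi hmono
    refine this.trans ?_
    rw [integral_const_mul, integral_exp_neg_Ioi_zero, mul_one]

theorem abs_integral_sub_integral_le (a b : ℝ) (ha : 0 < a) (hb : 0 < b) :
    |(∫ y in Set.Ioi (0 : ℝ), Real.exp (-y) / (1 + a * y)) -
      ∫ y in Set.Ioi (0 : ℝ), Real.exp (-y) / (1 + b * y)| ≤
      |b - a| / max 1 (max a b) := by
  rcases le_total a b with h | h
  · have h1 : |b - a| = b - a := abs_of_nonneg (by linarith)
    rw [h1, max_eq_right h]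
    exact aux a b ha h
  · have h1 : |b - a| = a - b := by rw [abs_sub_comm]; exact abs_of_nonneg (by linarith)
    rw [h1, max_eq_left h, abs_sub_comm]
    exact aux b a hb h
end

section
/- Let W_ρ be the a.s. martingale limit of (1+2ρ)^{-n} M(n), where M(n) is the branching process with offspring distribution 1 + Poisson(2ρ) and M(0)=1. Then for all ψ ≥ 0, E[e^{-ψ W_ρ}] ≤ (1+ψ)^{-1}. -/
open MeasureTheory ProbabilityTheory Real


private lemma gw_meas_natcomp {Ω : Type*} {m : MeasurableSpace Ω} {β : Type*} [MeasurableSpace β]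
    {T : Ω → ℕ} (hT : Measurable[m] T) {F : ℕ → Ω → β} (hF : ∀ k, Measurable[m] (F k)) :
    Measurable[m] fun ω => F (T ω) ω := by
  intro A hA
  have hset : (fun ω => F (T ω) ω) ⁻¹' A = ⋃ k, (T ⁻¹' {k} ∩ (F k) ⁻¹' A) := by
    ext ω
    constructor
    · intro h
      exact Set.mem_iUnion.2 ⟨T ω, ⟨rfl, h⟩⟩
    · intro h
      obtain ⟨k, hk1, hk2⟩ := Set.mem_iUnion.1 h
      have : T ω = k := hk1
      simpa [this] using hk2
  rw [hset]
  exact MeasurableSet.iUnion fun k => (hT (measurableSet_singleton k)).inter (hF k hA)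


private lemma gw_hmono (ρ : ℝ) (hρ : 0 < ρ) :
    Monotone (fun s : ℝ => s + 2*ρ*(1 - Real.exp (-s))) := by
  intro a b hab
  have h := Real.exp_le_exp.2 (neg_le_neg hab)
  simp only
  nlinarith

private lemma gw_keyB (ρ ψ : ℝ) (hρ : 0 < ρ) (hψ : 0 ≤ ψ) (n : ℕ) :
    Real.log (1+ψ) ≤
      (fun s : ℝ => s + 2*ρ*(1 - Real.exp (-s)))^[n] (Real.log (1 + ψ/(1+2*ρ)^n)) := by
  induction n with
  | zero => simp
  | succ n ih =>
    set f : ℝ → ℝ := fun s => s + 2*ρ*(1 - Real.exp (-s)) with hf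
    have hpow : (0:ℝ) < (1+2*ρ)^(n+1) := by positivity
    have hpown : (0:ℝ) < (1+2*ρ)^n := by positivity
    set t : ℝ := ψ/(1+2*ρ)^(n+1) with ht
    have ht0 : 0 ≤ t := div_nonneg hψ hpow.le
    have h1t : (0:ℝ) < 1 + t := by linarith
    -- step (ii): log (1 + (1+2ρ)t) ≤ f (log (1+t))
    have hii : Real.log (1 + ψ/(1+2*ρ)^n) ≤ f (Real.log (1+t)) := by
      have hexp : Real.exp (-(Real.log (1+t))) = (1+t)⁻¹ := by
        rw [Real.exp_neg, Real.exp_log h1t]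
      have hval : f (Real.log (1+t)) = Real.log (1+t) + 2*ρ*(t/(1+t)) := by
        rw [hf]; simp only [hexp]
        field_simp
        ring
      have hratio : ψ/(1+2*ρ)^n = (1+2*ρ)*t := by
        rw [ht, pow_succ]; field_simp
      have hfac : 1 + (1+2*ρ)*t = (1+t)*(1 + 2*ρ*t/(1+t)) := by field_simp; ring
      have hpos2 : (0:ℝ) < 1 + 2*ρ*t/(1+t) := by positivity
      have hlog2 : Real.log (1 + 2*ρ*t/(1+t)) ≤ 2*ρ*t/(1+t) := by
        have := Real.log_le_sub_one_of_pos hpos2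
        linarith
      rw [hratio, hfac, Real.log_mul (by positivity) (by positivity), hval]
      have : 2*ρ*t/(1+t) = 2*ρ*(t/(1+t)) := by ring
      linarith [this ▸ hlog2]
    have hmonoiter : Monotone (f^[n]) := (gw_hmono ρ hρ).iterate n
    calc Real.log (1+ψ) ≤ f^[n] (Real.log (1 + ψ/(1+2*ρ)^n)) := ih
      _ ≤ f^[n] (f (Real.log (1+t))) := hmonoiter hii
      _ = f^[n+1] (Real.log (1+t)) := (Function.iterate_succ_apply f n _).symm

private lemma gw_keyC (ρ ψ : ℝ) (hρ : 0 < ρ) (hψ : 0 ≤ ψ) (n : ℕ) :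
    Real.log (1+ψ) ≤ (fun s : ℝ => s + 2*ρ*(1 - Real.exp (-s)))^[n] (ψ/(1+2*ρ)^n) := by
  refine (gw_keyB ρ ψ hρ hψ n).trans ?_
  apply ((gw_hmono ρ hρ).iterate n)
  have hx : (0:ℝ) ≤ ψ/(1+2*ρ)^n := by positivity
  have := Real.log_le_sub_one_of_pos (show (0:ℝ) < 1 + ψ/(1+2*ρ)^n by linarith)
  linarith


private lemma gw_single (ρ s : ℝ) (hρ : 0 < ρ) (hs : 0 ≤ s) {Ω : Type*} [MeasurableSpace Ω]
    (μ : Measure Ω) [IsProbabilityMeasure μ] (Y : Ω → ℕ) (hYm : Measurable Y)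
    (hYd : μ.map Y = ((poissonPMF (2 * ρ).toNNReal).map (· + 1)).toMeasure) :
    ∫ ω, Real.exp (-s * (Y ω : ℝ)) ∂μ = Real.exp (-(s + 2*ρ*(1 - Real.exp (-s)))) := by
  have hg : Measurable (fun k : ℕ => Real.exp (-s * (k:ℝ))) := measurable_from_top
  have hadd : Measurable (fun k : ℕ => k + 1) := measurable_from_top
  set lr : NNReal := (2*ρ).toNNReal with hlr
  have hlrc : (lr : ℝ) = 2*ρ := Real.coe_toNNReal _ (by linarith)
  have hint : Integrable (fun k : ℕ => Real.exp (-s * ((k+1 : ℕ):ℝ)))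
      (poissonPMF lr).toMeasure := by
    refine (integrable_const (1:ℝ)).mono' (measurable_from_top (f := fun k : ℕ =>
      Real.exp (-s * ((k+1 : ℕ):ℝ)))).aestronglyMeasurable (ae_of_all _ fun k => ?_)
    rw [Real.norm_eq_abs, abs_of_pos (Real.exp_pos _)]
    apply Real.exp_le_one_iff.2
    have : (0:ℝ) ≤ ((k+1 : ℕ):ℝ) := by positivity
    nlinarith
  have h1 : ∫ ω, Real.exp (-s * (Y ω : ℝ)) ∂μ
      = ∫ k, Real.exp (-s * (k:ℝ)) ∂(μ.map Y) :=
    (integral_map hYm.aemeasurable hg.aestronglyMeasurable).symm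
  rw [h1, hYd, ← PMF.toMeasure_map (fun k : ℕ => k + 1) (poissonPMF lr) hadd,
    integral_map hadd.aemeasurable hg.aestronglyMeasurable,
    PMF.integral_eq_tsum _ _ hint]
  have hterm : ∀ k : ℕ, ((poissonPMF lr) k).toReal • Real.exp (-s * ((k+1 : ℕ):ℝ))
      = (Real.exp (-s) * Real.exp (-(2*ρ))) * ((2*ρ*Real.exp (-s))^k / (Nat.factorial k : ℝ)) := by
    intro k
    have hpk : (poissonPMF lr) k = ENNReal.ofReal (poissonPMFReal lr k) := rfl
    rw [hpk, ENNReal.toReal_ofReal poissonPMFReal_nonneg, smul_eq_mul]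
    unfold poissonPMFReal
    rw [hlrc]
    have he : Real.exp (-s * ((k+1 : ℕ):ℝ)) = Real.exp (-s) ^ k * Real.exp (-s) := by
      rw [← Real.exp_nat_mul, ← Real.exp_add]
      congr 1
      push_cast
      ring
    rw [he, mul_pow]
    ring
  rw [tsum_congr hterm, tsum_mul_left]
  have hsum : HasSum (fun k : ℕ => (2*ρ*Real.exp (-s))^k / (Nat.factorial k : ℝ))
      (Real.exp (2*ρ*Real.exp (-s))) := by
    rw [Real.exp_eq_exp_ℝ]
    exact NormedSpace.expSeries_div_hasSum_exp _
  rw [hsum.tsum_eq, ← Real.exp_add, ← Real.exp_add]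
  congr 1
  ring

private lemma gw_rec {Ω : Type*} [MeasurableSpace Ω] (μ : Measure Ω)
    [IsProbabilityMeasure μ] (ρ : ℝ) (hρ : 0 < ρ)
    (X : ℕ → ℕ → Ω → ℕ) (M : ℕ → Ω → ℕ)
    (hXm : ∀ n i, Measurable (X n i))
    (hindep : iIndepFun (fun p : ℕ × ℕ => X p.1 p.2) μ)
    (hXd : ∀ n i, μ.map (X n i) =
      ((poissonPMF (2 * ρ).toNNReal).map (· + 1)).toMeasure)
    (hM0 : ∀ ω, M 0 ω = 1)
    (hMrec : ∀ n ω, M (n + 1) ω = ∑ i ∈ Finset.range (M n ω), X n i ω)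
    (s : ℝ) (hs : 0 ≤ s) (n : ℕ) :
    ∫ ω, Real.exp (-s * (M (n+1) ω : ℝ)) ∂μ
      = ∫ ω, Real.exp (-(s + 2*ρ*(1 - Real.exp (-s))) * (M n ω : ℝ)) ∂μ := by
  -- basic setup
  set c : ℝ := Real.exp (-(s + 2*ρ*(1 - Real.exp (-s)))) with hc
  have hhs0 : 0 ≤ s + 2*ρ*(1 - Real.exp (-s)) := by
    have : Real.exp (-s) ≤ 1 := Real.exp_le_one_iff.2 (by linarith)
    nlinarith
  have hexple1 : ∀ t : ℝ, t ≤ 0 → ‖Real.exp t‖ ≤ 1 := fun t ht => by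
    rw [Real.norm_eq_abs, abs_of_pos (Real.exp_pos _)]
    exact Real.exp_le_one_iff.2 ht
  have hc1 : c ≤ 1 := by
    have := hexple1 _ (neg_nonpos.2 hhs0)
    rwa [Real.norm_eq_abs, abs_of_pos (Real.exp_pos _)] at this
  have hc0 : 0 < c := Real.exp_pos _
  set 𝔪 : ℕ × ℕ → MeasurableSpace Ω :=
    fun p => MeasurableSpace.comap (X p.1 p.2) inferInstance with h𝔪
  have h_le : ∀ p, 𝔪 p ≤ _ := fun p => (hXm p.1 p.2).comap_le
  have hiI : iIndep 𝔪 μ := hindep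
  -- independence helper
  have hIndepFun : ∀ (Sa Ta : Set (ℕ × ℕ)), Disjoint Sa Ta → ∀ {f g : Ω → ℝ},
      Measurable[⨆ p ∈ Sa, 𝔪 p] f → Measurable[⨆ p ∈ Ta, 𝔪 p] g → IndepFun f g μ := by
    intro Sa Ta hd f g hf hg
    have hbase : Indep (⨆ p ∈ Sa, 𝔪 p) (⨆ p ∈ Ta, 𝔪 p) μ :=
      indep_iSup_of_disjoint (fun p => h_le p) hiI hd
    exact indep_of_indep_of_le_right (indep_of_indep_of_le_left hbase hf.comap_le) hg.comap_le
  -- measurability of M n w.r.t. the σ-algebra of the first n generations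
  set G : ℕ → MeasurableSpace Ω := fun k => ⨆ p ∈ {q : ℕ × ℕ | q.1 < k}, 𝔪 p with hG
  have hXmem : ∀ (Sa : Set (ℕ × ℕ)) (p : ℕ × ℕ), p ∈ Sa →
      Measurable[⨆ q ∈ Sa, 𝔪 q] (X p.1 p.2) := fun Sa p hp =>
    Measurable.of_comap_le (le_biSup 𝔪 hp)
  have hMG : ∀ k, Measurable[G k] (M k) := by
    intro k
    induction k with
    | zero =>
      have : M 0 = fun _ => 1 := funext hM0
      rw [this]
      exact measurable_const
    | succ k ih =>
      have hGle : G k ≤ G (k+1) := by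
        apply biSup_mono
        intro p hp
        exact Nat.lt_succ_of_lt hp
      have hMn' : Measurable[G (k+1)] (M k) := ih.mono hGle le_rfl
      have hXk : ∀ i, Measurable[G (k+1)] (X k i) := fun i =>
        hXmem _ (k, i) (Nat.lt_succ_self k)
      have hF : ∀ m, Measurable[G (k+1)] (fun ω => ∑ i ∈ Finset.range m, X k i ω) :=
        fun m => Finset.measurable_sum _ fun i _ => hXk i
      have hMe : M (k+1) = fun ω =>
          (fun m ω' => ∑ i ∈ Finset.range m, X k i ω') (M k ω) ω := funext fun ω => hMrec k ω
      rw [hMe]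
      exact gw_meas_natcomp hMn' hF
  have hGle_amb : ∀ k, G k ≤ _ := fun k => iSup₂_le fun p _ => h_le p
  have hMmeas : ∀ k, Measurable (M k) := fun k => (hMG k).mono (hGle_amb k) le_rfl
  -- bounded implies integrable
  have hbdd : ∀ {f : Ω → ℝ}, Measurable f → (∀ ω, ‖f ω‖ ≤ 1) → Integrable f μ :=
    fun hf h1 => (integrable_const 1).mono' hf.aestronglyMeasurable (ae_of_all _ h1)
  -- the product functions
  set g : ℕ → Ω → ℝ := fun m ω => ∏ i ∈ Finset.range m, Real.exp (-s * (X n i ω : ℝ)) with hgdef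
  have hfacmeas : ∀ i, Measurable (fun ω => Real.exp (-s * (X n i ω : ℝ))) := fun i =>
    (measurable_from_top (f := fun k : ℕ => Real.exp (-s * (k : ℝ)))).comp (hXm n i)
  have hgmeas : ∀ m, Measurable (g m) := fun m =>
    Finset.measurable_prod _ fun i _ => hfacmeas i
  have hfac01 : ∀ i ω, Real.exp (-s * (X n i ω : ℝ)) ∈ Set.Icc (0:ℝ) 1 := by
    intro i ω
    constructor
    · exact (Real.exp_pos _).le
    · exact Real.exp_le_one_iff.2 (mul_nonpos_of_nonpos_of_nonneg (by linarith) (Nat.cast_nonneg _))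
  have hg01 : ∀ m ω, g m ω ∈ Set.Icc (0:ℝ) 1 := by
    intro m ω
    constructor
    · exact Finset.prod_nonneg fun i _ => (hfac01 i ω).1
    · exact Finset.prod_le_one (fun i _ => (hfac01 i ω).1) (fun i _ => (hfac01 i ω).2)
  have hgnorm : ∀ m ω, ‖g m ω‖ ≤ 1 := fun m ω => by
    rw [Real.norm_eq_abs, abs_of_nonneg (hg01 m ω).1]; exact (hg01 m ω).2
  have hgint : ∀ m, Integrable (g m) μ := fun m => hbdd (hgmeas m) (hgnorm m)
  -- Step C : ∫ g m = c ^ m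
  have hgC : ∀ m, ∫ ω, g m ω ∂μ = c ^ m := by
    intro m
    induction m with
    | zero => simp [hgdef]
    | succ m ih =>
      have hsplit : g (m+1) = (fun ω => g m ω) * (fun ω => Real.exp (-s * (X n m ω : ℝ))) := by
        funext ω
        simp [hgdef, Finset.prod_range_succ]
      have hgm_meas : Measurable[⨆ p ∈ {q : ℕ × ℕ | q.1 = n ∧ q.2 < m}, 𝔪 p] (g m) :=
        Finset.measurable_prod _ fun i hi =>
          (measurable_from_top (f := fun k : ℕ => Real.exp (-s * (k : ℝ)))).comp
            (hXmem _ (n, i) ⟨rfl, Finset.mem_range.1 hi⟩)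
      have hfm_meas : Measurable[⨆ p ∈ ({(n, m)} : Set (ℕ × ℕ)), 𝔪 p]
          (fun ω => Real.exp (-s * (X n m ω : ℝ))) :=
        (measurable_from_top (f := fun k : ℕ => Real.exp (-s * (k : ℝ)))).comp
          (hXmem _ (n, m) rfl)
      have hdisj : Disjoint {q : ℕ × ℕ | q.1 = n ∧ q.2 < m} ({(n, m)} : Set (ℕ × ℕ)) := by
        rw [Set.disjoint_left]
        rintro ⟨a, b⟩ ⟨h1, h2⟩ h3
        simp only [Set.mem_singleton_iff, Prod.mk.injEq] at h3
        omega
      have hind : IndepFun (g m) (fun ω => Real.exp (-s * (X n m ω : ℝ))) μ :=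
        hIndepFun _ _ hdisj hgm_meas hfm_meas
      have hfint : Integrable (fun ω => Real.exp (-s * (X n m ω : ℝ))) μ :=
        hbdd (hfacmeas m) (fun ω => by
          rw [Real.norm_eq_abs, abs_of_nonneg (hfac01 m ω).1]; exact (hfac01 m ω).2)
      rw [hsplit, hind.integral_mul_eq_mul_integral (hgint m).aestronglyMeasurable hfint.aestronglyMeasurable, ih,
        gw_single ρ s hρ hs μ (X n m) (hXm n m) (hXd n m), ← hc, pow_succ]
  -- fibers of M n
  set fib : ℕ → Set Ω := fun m => M n ⁻¹' {m} with hfib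
  have hfibm : ∀ m, MeasurableSet (fib m) := fun m => hMmeas n (measurableSet_singleton m)
  have hfibmG : ∀ m, MeasurableSet[G n] (fib m) := fun m => hMG n (measurableSet_singleton m)
  have hdisjf : Pairwise (Function.onFun Disjoint fib) := fun i j hij =>
    Disjoint.preimage _ (by simpa using hij)
  have hcover : ⋃ m, fib m = Set.univ := by
    ext ω; simp [hfib]
  -- independence of indicator and g m
  have hindGg : ∀ m, IndepFun (Set.indicator (fib m) (fun _ => (1:ℝ))) (g m) μ := by
    intro m
    have h1 : Measurable[G n] (Set.indicator (fib m) (fun _ => (1:ℝ))) :=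
      measurable_const.indicator (hfibmG m)
    have h2 : Measurable[⨆ p ∈ {q : ℕ × ℕ | q.1 = n}, 𝔪 p] (g m) :=
      Finset.measurable_prod _ fun i _ =>
        (measurable_from_top (f := fun k : ℕ => Real.exp (-s * (k : ℝ)))).comp
          (hXmem _ (n, i) rfl)
    have hdisj : Disjoint {q : ℕ × ℕ | q.1 < n} {q : ℕ × ℕ | q.1 = n} := by
      rw [Set.disjoint_left]
      rintro ⟨a, b⟩ h1' h2'
      simp only [Set.mem_setOf_eq] at h1' h2'
      omega
    exact hIndepFun _ _ hdisj h1 h2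
  -- set integral of g m over fiber
  have hsetint : ∀ m, ∫ ω in fib m, g m ω ∂μ = (μ (fib m)).toReal * c ^ m := by
    intro m
    have hip : (fib m).indicator (g m) =
        (Set.indicator (fib m) (fun _ => (1:ℝ))) * (g m) := by
      funext ω
      by_cases hω : ω ∈ fib m <;> simp [hω]
    have hindint : Integrable (Set.indicator (fib m) (fun _ => (1:ℝ))) μ := by
      refine hbdd (measurable_const.indicator (hfibm m)) (fun ω => ?_)
      by_cases hω : ω ∈ fib m <;> simp [hω]
    rw [← integral_indicator (hfibm m), hip,
      (hindGg m).integral_mul_eq_mul_integral hindint.aestronglyMeasurable (hgint m).aestronglyMeasurable, hgC m,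
      integral_indicator (hfibm m)]
    simp
    exact Or.inl rfl
  -- rewrite both integrands
  have hL1 : (fun ω => Real.exp (-s * ((M (n+1) ω : ℕ) : ℝ))) = fun ω => g (M n ω) ω := by
    funext ω
    rw [hMrec n ω, hgdef]
    simp only
    rw [Nat.cast_sum, Finset.mul_sum, Real.exp_sum]
  have hR1 : (fun ω => Real.exp (-(s + 2*ρ*(1 - Real.exp (-s))) * ((M n ω : ℕ) : ℝ)))
      = fun ω => c ^ (M n ω) := by
    funext ω
    rw [hc, ← Real.exp_nat_mul]
    congr 1
    ring
  have hFmeas : Measurable (fun ω => g (M n ω) ω) := gw_meas_natcomp (hMmeas n) hgmeas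
  have hFint : Integrable (fun ω => g (M n ω) ω) μ := hbdd hFmeas (fun ω => hgnorm _ ω)
  have hRmeas : Measurable (fun ω => c ^ (M n ω)) :=
    (measurable_from_top (f := fun k : ℕ => c ^ k)).comp (hMmeas n)
  have hRint : Integrable (fun ω => c ^ (M n ω)) μ := by
    refine hbdd hRmeas (fun ω => ?_)
    rw [Real.norm_eq_abs, abs_of_nonneg (pow_nonneg hc0.le _)]
    exact pow_le_one₀ hc0.le hc1
  calc ∫ ω, Real.exp (-s * ((M (n+1) ω : ℕ) : ℝ)) ∂μ
      = ∫ ω, g (M n ω) ω ∂μ := by rw [hL1]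
    _ = ∫ ω in ⋃ m, fib m, g (M n ω) ω ∂μ := by rw [hcover, setIntegral_univ]
    _ = ∑' m, ∫ ω in fib m, g (M n ω) ω ∂μ :=
        integral_iUnion hfibm hdisjf (hcover ▸ hFint.integrableOn)
    _ = ∑' m, ∫ ω in fib m, g m ω ∂μ := by
        refine tsum_congr fun m => setIntegral_congr_fun (hfibm m) (fun ω hω => ?_)
        have : M n ω = m := hω
        rw [this]
    _ = ∑' m, (μ (fib m)).toReal * c ^ m := tsum_congr fun m => hsetint m
    _ = ∑' m, ∫ ω in fib m, c ^ (M n ω) ∂μ := by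
        refine tsum_congr fun m => ?_
        have heq : ∫ ω in fib m, c ^ (M n ω) ∂μ = ∫ ω in fib m, c ^ m ∂μ := by
          refine setIntegral_congr_fun (hfibm m) (fun ω hω => ?_)
          have : M n ω = m := hω
          rw [this]
        rw [heq, setIntegral_const, smul_eq_mul]; rfl
    _ = ∫ ω in ⋃ m, fib m, c ^ (M n ω) ∂μ :=
        (integral_iUnion hfibm hdisjf (hcover ▸ hRint.integrableOn)).symm
    _ = ∫ ω, c ^ (M n ω) ∂μ := by rw [hcover, setIntegral_univ]
    _ = ∫ ω, Real.exp (-(s + 2*ρ*(1 - Real.exp (-s))) * ((M n ω : ℕ) : ℝ)) ∂μ := by rw [hR1]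

private lemma gw_iter {Ω : Type*} [MeasurableSpace Ω] (μ : Measure Ω)
    [IsProbabilityMeasure μ] (ρ : ℝ) (hρ : 0 < ρ)
    (X : ℕ → ℕ → Ω → ℕ) (M : ℕ → Ω → ℕ)
    (hXm : ∀ n i, Measurable (X n i))
    (hindep : iIndepFun (fun p : ℕ × ℕ => X p.1 p.2) μ)
    (hXd : ∀ n i, μ.map (X n i) =
      ((poissonPMF (2 * ρ).toNNReal).map (· + 1)).toMeasure)
    (hM0 : ∀ ω, M 0 ω = 1)
    (hMrec : ∀ n ω, M (n + 1) ω = ∑ i ∈ Finset.range (M n ω), X n i ω)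
    (n : ℕ) :
    ∀ s : ℝ, 0 ≤ s → ∫ ω, Real.exp (-s * (M n ω : ℝ)) ∂μ
      = Real.exp (-((fun t : ℝ => t + 2*ρ*(1 - Real.exp (-t)))^[n] s)) := by
  induction n with
  | zero =>
    intro s hs
    have h0 : (fun ω => Real.exp (-s * ((M 0 ω : ℕ) : ℝ))) = fun _ => Real.exp (-s) := by
      funext ω
      rw [hM0 ω]
      norm_num
    rw [h0, integral_const]
    simp
  | succ n ih =>
    intro s hs
    have hhs0 : 0 ≤ s + 2*ρ*(1 - Real.exp (-s)) := by
      have : Real.exp (-s) ≤ 1 := Real.exp_le_one_iff.2 (by linarith)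
      nlinarith
    rw [gw_rec μ ρ hρ X M hXm hindep hXd hM0 hMrec s hs n, ih _ hhs0,
      Function.iterate_succ_apply]

/-- Let `W_ρ` be the a.s. limit of the martingale `(1+2ρ)^{-n} M(n)`, where
`M(n)` is the Galton–Watson process with offspring distribution
`1 + Poisson(2ρ)` and `M(0) = 1`. Then `E[e^{-ψ W_ρ}] ≤ (1+ψ)⁻¹` for `ψ ≥ 0`. -/
theorem gw_limit_laplace_le (Ω : Type*) [MeasurableSpace Ω] (μ : Measure Ω)
    [IsProbabilityMeasure μ] (ρ : ℝ) (hρ : 0 < ρ)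
    (X : ℕ → ℕ → Ω → ℕ) (M : ℕ → Ω → ℕ)
    (hXm : ∀ n i, Measurable (X n i))
    (hindep : iIndepFun (fun p : ℕ × ℕ => X p.1 p.2) μ)
    (hXd : ∀ n i, μ.map (X n i) =
      ((poissonPMF (2 * ρ).toNNReal).map (· + 1)).toMeasure)
    (hM0 : ∀ ω, M 0 ω = 1)
    (hMrec : ∀ n ω, M (n + 1) ω = ∑ i ∈ Finset.range (M n ω), X n i ω)
    (W : Ω → ℝ) (hWm : Measurable W)
    (hWlim : ∀ᵐ ω ∂μ, Filter.Tendsto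
      (fun n => ((1 + 2 * ρ) ^ n)⁻¹ * (M n ω : ℝ)) Filter.atTop (nhds (W ω)))
    (ψ : ℝ) (hψ : 0 ≤ ψ) :
    (∫ ω, Real.exp (-ψ * W ω) ∂μ) ≤ (1 + ψ)⁻¹ := by
  have h2ρ : (0:ℝ) < 1 + 2 * ρ := by linarith
  -- measurability of M n
  have hMmeas : ∀ n, Measurable (M n) := by
    intro n
    induction n with
    | zero =>
      have : M 0 = fun _ => 1 := funext hM0
      rw [this]; exact measurable_const
    | succ n ih =>
      have hMe : M (n+1) = fun ω =>
          (fun m ω' => ∑ i ∈ Finset.range m, X n i ω') (M n ω) ω := funext fun ω => hMrec n ω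
      rw [hMe]
      exact gw_meas_natcomp ih (fun m => Finset.measurable_sum _ fun i _ => hXm n i)
  -- uniform bound for each n
  have key : ∀ n, ∫ ω, Real.exp (-ψ * (((1 + 2 * ρ) ^ n)⁻¹ * (M n ω : ℝ))) ∂μ ≤ (1 + ψ)⁻¹ := by
    intro n
    have hsn : 0 ≤ ψ * ((1 + 2 * ρ) ^ n)⁻¹ := by positivity
    have heq : (fun ω => Real.exp (-ψ * (((1 + 2 * ρ) ^ n)⁻¹ * (M n ω : ℝ)))) =
        fun ω => Real.exp (-(ψ * ((1 + 2 * ρ) ^ n)⁻¹) * (M n ω : ℝ)) := by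
      funext ω
      congr 1
      ring
    rw [heq, gw_iter μ ρ hρ X M hXm hindep hXd hM0 hMrec n _ hsn]
    have hdiv : ψ * ((1 + 2 * ρ) ^ n)⁻¹ = ψ / (1 + 2 * ρ) ^ n := (div_eq_mul_inv _ _).symm
    rw [hdiv]
    calc Real.exp (-((fun t : ℝ => t + 2*ρ*(1 - Real.exp (-t)))^[n] (ψ / (1 + 2 * ρ) ^ n)))
        ≤ Real.exp (-(Real.log (1 + ψ))) :=
          Real.exp_le_exp.2 (neg_le_neg (gw_keyC ρ ψ hρ hψ n))
      _ = (1 + ψ)⁻¹ := by rw [Real.exp_neg, Real.exp_log (by linarith)]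
  -- dominated convergence
  set F : ℕ → Ω → ℝ := fun n ω => Real.exp (-ψ * (((1 + 2 * ρ) ^ n)⁻¹ * (M n ω : ℝ))) with hF
  have hFm : ∀ n, AEStronglyMeasurable (F n) μ := fun n =>
    ((measurable_from_top (f := fun k : ℕ =>
      Real.exp (-ψ * (((1 + 2 * ρ) ^ n)⁻¹ * (k : ℝ))))).comp (hMmeas n)).aestronglyMeasurable
  have hbound : ∀ n, ∀ᵐ ω ∂μ, ‖F n ω‖ ≤ 1 := by
    intro n
    refine ae_of_all _ fun ω => ?_
    rw [hF, Real.norm_eq_abs, abs_of_pos (Real.exp_pos _)]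
    apply Real.exp_le_one_iff.2
    have h1 : (0:ℝ) ≤ ((1 + 2 * ρ) ^ n)⁻¹ * (M n ω : ℝ) := by positivity
    nlinarith
  have hlim : ∀ᵐ ω ∂μ, Filter.Tendsto (fun n => F n ω) Filter.atTop
      (nhds (Real.exp (-ψ * W ω))) := by
    filter_upwards [hWlim] with ω hω
    exact (Real.continuous_exp.tendsto _).comp (hω.const_mul (-ψ))
  have htend := tendsto_integral_of_dominated_convergence (μ := μ)
    (fun _ => (1:ℝ)) hFm (integrable_const 1) hbound hlim
  exact le_of_tendsto htend (Filter.Eventually.of_forall key)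
end

section
/- Let φ_e(θ) = (1+θ)^{-1} and define Ψφ_e(θ) = f(φ_e(θ/m)) with f(s) = s·e^{2ρ(s−1)} and m = 1+2ρ, ρ > 0. Then sup_{θ>0} θ^{-2}|Ψφ_e(θ) − φ_e(θ)| ≤ 2ρ²/(1+2ρ)². -/
lemma aux_lower (x : ℝ) (hx : 0 ≤ x) : 1 - x ^ 2 / 2 ≤ (1 + x) * Real.exp (-x) := by
  set f : ℝ → ℝ := fun t => (1 + t) * Real.exp (-t) - 1 + t ^ 2 / 2 with hf
  have hder : ∀ y : ℝ, HasDerivAt f (y * (1 - Real.exp (-y))) y := by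
    intro y
    have h1 : HasDerivAt (fun t : ℝ => Real.exp (-t)) (-Real.exp (-y)) y := by
      simpa [Function.comp_def] using (Real.hasDerivAt_exp (-y)).comp y ((hasDerivAt_id y).neg)
    have h2 : HasDerivAt (fun t : ℝ => (1 + t) * Real.exp (-t))
        ((0 + 1) * Real.exp (-y) + (1 + y) * (-Real.exp (-y))) y := by
      have := ((hasDerivAt_const y (1:ℝ)).add (hasDerivAt_id y)).mul h1
      simpa [Pi.add_def, Pi.mul_def] using this
    have h3 : HasDerivAt (fun t : ℝ => t ^ 2 / 2) (y) y := by
      simpa using (hasDerivAt_pow 2 y).div_const 2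
    have := (h2.sub (hasDerivAt_const y (1:ℝ))).add h3
    exact this.congr_deriv (by ring)
  have mono : MonotoneOn f (Set.Ici (0:ℝ)) := by
    apply monotoneOn_of_deriv_nonneg (convex_Ici 0)
    · exact Continuous.continuousOn (by fun_prop)
    · intro y hy
      exact (hder y).differentiableAt.differentiableWithinAt
    · intro y hy
      rw [(hder y).deriv]
      rw [interior_Ici] at hy
      have hy' : (0:ℝ) < y := hy
      have : Real.exp (-y) ≤ 1 := Real.exp_le_one_iff.mpr (by linarith)
      nlinarith
  have h0 : f 0 = 0 := by simp [hf]
  have := mono (Set.self_mem_Ici) (Set.mem_Ici.mpr hx) hx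
  rw [h0] at this
  simp only [hf] at this
  linarith

lemma aux_bound (x : ℝ) (hx : 0 ≤ x) : |(1 + x) * Real.exp (-x) - 1| ≤ x ^ 2 / 2 := by
  rw [abs_le]
  constructor
  · have := aux_lower x hx
    linarith
  · have h2 : (1 + x) * Real.exp (-x) ≤ Real.exp x * Real.exp (-x) := by
      apply mul_le_mul_of_nonneg_right _ (Real.exp_nonneg _)
      linarith [Real.add_one_le_exp x]
    rw [← Real.exp_add] at h2
    simp only [add_neg_cancel, Real.exp_zero] at h2
    nlinarith

/-- With `φ_e(θ) = (1+θ)⁻¹`, `f(s) = s·exp(2ρ(s-1))`, `m = 1+2ρ`, one has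
`sup_{θ>0} θ⁻²|f(φ_e(θ/m)) - φ_e(θ)| ≤ 2ρ²/(1+2ρ)²`, stated pointwise. -/
theorem Psi_phie_close (ρ : ℝ) (hρ : 0 < ρ) :
    ∀ θ > 0,
      |(1 + θ / (1 + 2 * ρ))⁻¹ *
          Real.exp (2 * ρ * ((1 + θ / (1 + 2 * ρ))⁻¹ - 1)) - (1 + θ)⁻¹| ≤
        2 * ρ ^ 2 / (1 + 2 * ρ) ^ 2 * θ ^ 2 := by
  intro θ hθ
  have hm : (0:ℝ) < 1 + 2 * ρ := by linarith
  have hmθ : (0:ℝ) < 1 + 2 * ρ + θ := by linarith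
  have hθ1 : (0:ℝ) < 1 + θ := by linarith
  set x : ℝ := 2 * ρ * θ / (1 + 2 * ρ + θ) with hxdef
  have hx0 : 0 ≤ x := by positivity
  -- exponent equals -x
  have hexp : 2 * ρ * ((1 + θ / (1 + 2 * ρ))⁻¹ - 1) = -x := by
    rw [hxdef]
    field_simp
    ring
  -- the base
  have hbase : (1 + θ / (1 + 2 * ρ))⁻¹ = (1 + θ)⁻¹ * (1 + x) := by
    rw [hxdef]
    field_simp
    ring
  rw [hexp, hbase]
  have key : (1 + θ)⁻¹ * (1 + x) * Real.exp (-x) - (1 + θ)⁻¹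
      = (1 + θ)⁻¹ * ((1 + x) * Real.exp (-x) - 1) := by ring
  rw [key, abs_mul, abs_of_pos (inv_pos.mpr hθ1)]
  have h1 : (1 + θ)⁻¹ ≤ 1 := by
    rw [inv_le_one_iff₀]; right; linarith
  have h2 : |(1 + x) * Real.exp (-x) - 1| ≤ x ^ 2 / 2 := aux_bound x hx0
  have h3 : x ^ 2 / 2 ≤ 2 * ρ ^ 2 / (1 + 2 * ρ) ^ 2 * θ ^ 2 := by
    have hxle : x ≤ 2 * ρ * θ / (1 + 2 * ρ) := by
      rw [hxdef]
      apply div_le_div_of_nonneg_left (by positivity) hm (by linarith)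
    have hsq : x ^ 2 ≤ (2 * ρ * θ / (1 + 2 * ρ)) ^ 2 := by
      apply pow_le_pow_left₀ hx0 hxle
    have heq : (2 * ρ * θ / (1 + 2 * ρ)) ^ 2 = 2 * (2 * ρ ^ 2 / (1 + 2 * ρ) ^ 2 * θ ^ 2) := by
      field_simp
    linarith
  calc (1 + θ)⁻¹ * |(1 + x) * Real.exp (-x) - 1|
      ≤ 1 * (x ^ 2 / 2) := by
        apply mul_le_mul h1 h2 (abs_nonneg _) zero_le_one
    _ ≤ 2 * ρ ^ 2 / (1 + 2 * ρ) ^ 2 * θ ^ 2 := by linarith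
end

section
/- Let φ_ρ be the Laplace transform of the martingale limit W_ρ of the branching process with offspring distribution 1+Poisson(2ρ), ρ > 0, and φ_e(θ) = (1+θ)^{-1}. Then sup_{θ>0} θ^{-2}|φ_ρ(θ) − φ_e(θ)| ≤ ρ/(1+2ρ). -/
open MeasureTheory ProbabilityTheory
open scoped NNReal ENNReal

-- key analytic estimate: 0 ≤ (1+x)⁻¹ - exp(-x) ≤ x²/2 for x ≥ 0
lemma exp_neg_le_inv {x : ℝ} (hx : 0 ≤ x) : Real.exp (-x) ≤ (1 + x)⁻¹ := by
  rw [Real.exp_neg]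
  apply inv_anti₀ (by linarith)
  linarith [Real.add_one_le_exp x]

lemma one_add_mul_exp_neg_ge {x : ℝ} (hx : 0 ≤ x) :
    1 - x ^ 2 / 2 ≤ (1 + x) * Real.exp (-x) := by
  set h : ℝ → ℝ := fun x => (1 + x) * Real.exp (-x) + x ^ 2 / 2 - 1 with hh
  have hd : ∀ y ∈ Set.Ici (0:ℝ), HasDerivAt h (y * (1 - Real.exp (-y))) y := by
    intro y _
    have h1 : HasDerivAt (fun y : ℝ => Real.exp (-y)) (-Real.exp (-y)) y := by
      simpa [Function.comp_def] using (Real.hasDerivAt_exp (-y)).comp y (hasDerivAt_neg y)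
    have h2 : HasDerivAt (fun y : ℝ => (1 + y) * Real.exp (-y))
        (1 * Real.exp (-y) + (1 + y) * (-Real.exp (-y))) y :=
      (((hasDerivAt_id y).const_add 1).mul h1)
    have h3 : HasDerivAt (fun y : ℝ => y ^ 2 / 2) y y := by
      simpa using (hasDerivAt_pow 2 y).div_const 2
    have := (h2.add h3).sub_const 1
    exact this.congr_deriv (by ring)
  have hmono : MonotoneOn h (Set.Ici 0) := by
    apply monotoneOn_of_deriv_nonneg (convex_Ici 0)
    · exact ContinuousOn.sub (ContinuousOn.add (by fun_prop) (by fun_prop)) continuousOn_const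
    · intro y hy
      rw [interior_Ici] at hy
      exact (hd y (Set.mem_Ici.mpr (Set.mem_Ioi.mp hy).le)).differentiableAt.differentiableWithinAt
    · intro y hy
      rw [interior_Ici] at hy
      rw [(hd y (Set.mem_Ici.mpr (le_of_lt (Set.mem_Ioi.mp hy)))).deriv]
      have : Real.exp (-y) ≤ 1 := Real.exp_le_one_iff.mpr (by linarith [(Set.mem_Ioi.mp hy).le])
      nlinarith [(Set.mem_Ioi.mp hy).le]
  have h0 : h 0 = 0 := by simp [hh]
  have := hmono (Set.self_mem_Ici) hx hx
  rw [h0] at this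
  simp only [hh] at this
  linarith

lemma inv_sub_exp_le {x : ℝ} (hx : 0 ≤ x) : (1 + x)⁻¹ - Real.exp (-x) ≤ x ^ 2 / 2 := by
  have h1 : (0:ℝ) < 1 + x := by linarith
  have h2 := one_add_mul_exp_neg_ge hx
  rw [sub_le_iff_le_add, inv_le_iff_one_le_mul₀ h1]  -- guess
  nlinarith [Real.exp_pos (-x)]

noncomputable def gwf (ρ s : ℝ) : ℝ := s * Real.exp (2 * ρ * (s - 1))

lemma gwf_mem {ρ s : ℝ} (hρ : 0 < ρ) (hs : s ∈ Set.Icc (0:ℝ) 1) :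
    gwf ρ s ∈ Set.Icc (0:ℝ) 1 := by
  obtain ⟨h0, h1⟩ := hs
  constructor
  · exact mul_nonneg h0 (Real.exp_pos _).le
  · have := Real.exp_le_one_iff.mpr (show 2 * ρ * (s - 1) ≤ 0 by nlinarith)
    unfold gwf
    nlinarith [Real.exp_pos (2 * ρ * (s - 1))]

lemma exp_sub_exp_abs {x y : ℝ} (hx : x ≤ 0) (hy : y ≤ 0) :
    |Real.exp x - Real.exp y| ≤ |x - y| := by
  wlog h : y ≤ x generalizing x y
  · rw [abs_sub_comm, abs_sub_comm x y]; exact this hy hx (le_of_not_ge h)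
  rw [abs_of_nonneg (by linarith [Real.exp_le_exp.mpr h]), abs_of_nonneg (by linarith)]
  have h1 : Real.exp x ≤ 1 := Real.exp_le_one_iff.mpr hx
  have h2 : Real.exp y = Real.exp x * Real.exp (y - x) := by
    rw [← Real.exp_add]; ring_nf
  have h3 : 1 + (y - x) ≤ Real.exp (y - x) := by linarith [Real.add_one_le_exp (y - x)]
  nlinarith [Real.exp_pos x]

lemma gwf_lip {ρ a b : ℝ} (hρ : 0 < ρ) (ha : a ∈ Set.Icc (0:ℝ) 1) (hb : b ∈ Set.Icc (0:ℝ) 1) :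
    |gwf ρ a - gwf ρ b| ≤ (1 + 2 * ρ) * |a - b| := by
  obtain ⟨ha0, ha1⟩ := ha
  obtain ⟨hb0, hb1⟩ := hb
  have key : gwf ρ a - gwf ρ b
      = (a - b) * Real.exp (2 * ρ * (a - 1)) + b * (Real.exp (2 * ρ * (a - 1)) - Real.exp (2 * ρ * (b - 1))) := by
    unfold gwf; ring
  rw [key]
  calc |(a - b) * Real.exp (2 * ρ * (a - 1)) + b * (Real.exp (2 * ρ * (a - 1)) - Real.exp (2 * ρ * (b - 1)))|
      ≤ |(a - b) * Real.exp (2 * ρ * (a - 1))| + |b * (Real.exp (2 * ρ * (a - 1)) - Real.exp (2 * ρ * (b - 1)))| :=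
        abs_add_le _ _
    _ ≤ |a - b| * 1 + 1 * (2 * ρ * |a - b|) := by
        apply add_le_add
        · rw [abs_mul]
          apply mul_le_mul_of_nonneg_left _ (abs_nonneg _)
          rw [abs_of_nonneg (Real.exp_pos _).le]
          exact Real.exp_le_one_iff.mpr (by nlinarith)
        · rw [abs_mul]
          apply mul_le_mul (by rw [abs_of_nonneg hb0]; exact hb1) _ (abs_nonneg _) one_pos.le
          calc |Real.exp (2 * ρ * (a - 1)) - Real.exp (2 * ρ * (b - 1))|
              ≤ |2 * ρ * (a - 1) - 2 * ρ * (b - 1)| :=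
                exp_sub_exp_abs (by nlinarith) (by nlinarith)
            _ = 2 * ρ * |a - b| := by
                rw [show 2 * ρ * (a - 1) - 2 * ρ * (b - 1) = 2 * ρ * (a - b) by ring, abs_mul,
                  abs_of_nonneg (by linarith : (0:ℝ) ≤ 2 * ρ)]
    _ = (1 + 2 * ρ) * |a - b| := by ring



lemma gwf_phie_u {ρ u : ℝ} (hρ : 0 < ρ) (hu0 : 0 < u) :
    |gwf ρ ((1 + u)⁻¹) - (1 + (1 + 2 * ρ) * u)⁻¹| ≤ 2 * ρ ^ 2 * u ^ 2 := by
  have h1u : (0:ℝ) < 1 + u := by linarith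
  have hx0 : (0:ℝ) ≤ 2 * ρ * u / (1 + u) := by positivity
  have e1 : gwf ρ ((1 + u)⁻¹) = (1 + u)⁻¹ * Real.exp (-(2 * ρ * u / (1 + u))) := by
    unfold gwf
    congr 2
    field_simp
    ring
  have e2 : (1 + (1 + 2 * ρ) * u)⁻¹ = (1 + u)⁻¹ * (1 + 2 * ρ * u / (1 + u))⁻¹ := by
    rw [← mul_inv]
    congr 1
    field_simp
    ring
  rw [e1, e2, ← mul_sub, abs_mul, abs_of_nonneg (by positivity : (0:ℝ) ≤ (1+u)⁻¹)]
  have habs : |Real.exp (-(2 * ρ * u / (1 + u))) - (1 + 2 * ρ * u / (1 + u))⁻¹|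
      ≤ (2 * ρ * u / (1 + u)) ^ 2 / 2 := by
    rw [abs_sub_comm, abs_of_nonneg (by linarith [exp_neg_le_inv hx0])]
    exact inv_sub_exp_le hx0
  have hxle : 2 * ρ * u / (1 + u) ≤ 2 * ρ * u := by
    rw [div_le_iff₀ h1u]
    nlinarith [mul_pos (mul_pos hρ hu0) hu0]
  calc (1 + u)⁻¹ * |Real.exp (-(2 * ρ * u / (1 + u))) - (1 + 2 * ρ * u / (1 + u))⁻¹|
      ≤ 1 * ((2 * ρ * u / (1 + u)) ^ 2 / 2) := by
        apply mul_le_mul _ habs (abs_nonneg _) one_pos.le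
        rw [inv_le_one_iff₀]; right; linarith
    _ ≤ 2 * ρ ^ 2 * u ^ 2 := by nlinarith [hx0]

lemma gwf_phie {ρ θ : ℝ} (hρ : 0 < ρ) (hθ : 0 < θ) :
    |gwf ρ ((1 + θ / (1 + 2 * ρ))⁻¹) - (1 + θ)⁻¹| ≤ 2 * ρ ^ 2 / (1 + 2 * ρ) ^ 2 * θ ^ 2 := by
  have hc0 : (0:ℝ) < 1 + 2 * ρ := by linarith
  have h1 := gwf_phie_u hρ (div_pos hθ hc0)
  have e1 : (1 + 2 * ρ) * (θ / (1 + 2 * ρ)) = θ := by field_simp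
  rw [e1] at h1
  calc |gwf ρ ((1 + θ / (1 + 2 * ρ))⁻¹) - (1 + θ)⁻¹| ≤ 2 * ρ ^ 2 * (θ / (1 + 2 * ρ)) ^ 2 := h1
    _ = 2 * ρ ^ 2 / (1 + 2 * ρ) ^ 2 * θ ^ 2 := by field_simp

lemma gwf_iter_mem {ρ : ℝ} (hρ : 0 < ρ) (n : ℕ) {s : ℝ} (hs : s ∈ Set.Icc (0:ℝ) 1) :
    (gwf ρ)^[n] s ∈ Set.Icc (0:ℝ) 1 := by
  induction n generalizing s with
  | zero => simpa
  | succ n ih => rw [Function.iterate_succ_apply]; exact ih (gwf_mem hρ hs)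

lemma gwf_iter_bound {ρ : ℝ} (hρ : 0 < ρ) :
    ∀ n : ℕ, ∀ θ : ℝ, 0 < θ →
    |(gwf ρ)^[n] (Real.exp (-(θ * (((1 + 2*ρ) ^ n)⁻¹)))) - (1 + θ)⁻¹| ≤
      (1/2 * ((1 + 2*ρ)⁻¹) ^ n + ρ / (1 + 2*ρ)) * θ ^ 2 := by
  have hc0 : (0:ℝ) < 1 + 2 * ρ := by linarith
  intro n
  induction n with
  | zero =>
    intro θ hθ
    simp only [Function.iterate_zero, id, pow_zero, inv_one, mul_one]
    rw [abs_sub_comm, abs_of_nonneg (by linarith [exp_neg_le_inv hθ.le])]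
    have h1 := inv_sub_exp_le hθ.le
    have h2 : 0 ≤ ρ / (1 + 2 * ρ) := by positivity
    nlinarith [sq_nonneg θ]
  | succ n ih =>
    intro θ hθ
    have hθ' : 0 < θ / (1 + 2*ρ) := div_pos hθ hc0
    have harg : θ * (((1 + 2*ρ) ^ (n+1))⁻¹) = (θ / (1 + 2*ρ)) * (((1 + 2*ρ) ^ n)⁻¹) := by
      rw [pow_succ, mul_inv, div_mul_eq_mul_div, div_eq_mul_inv]
      ring
    have e1 : (gwf ρ)^[n+1] (Real.exp (-(θ * (((1 + 2*ρ) ^ (n+1))⁻¹))))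
        = gwf ρ ((gwf ρ)^[n] (Real.exp (-((θ / (1 + 2*ρ)) * (((1 + 2*ρ) ^ n)⁻¹))))) := by
      rw [harg, Function.iterate_succ_apply']
    have hexp_mem : Real.exp (-((θ / (1 + 2*ρ)) * (((1 + 2*ρ) ^ n)⁻¹))) ∈ Set.Icc (0:ℝ) 1 := by
      refine ⟨(Real.exp_pos _).le, Real.exp_le_one_iff.mpr ?_⟩
      have : (0:ℝ) ≤ (θ / (1 + 2*ρ)) * (((1 + 2*ρ) ^ n)⁻¹) := by positivity
      linarith
    have ha := gwf_iter_mem hρ n hexp_mem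
    have hb : (1 + θ / (1 + 2*ρ))⁻¹ ∈ Set.Icc (0:ℝ) 1 := by
      constructor
      · positivity
      · rw [inv_le_one_iff₀]; right; linarith
    have key := gwf_lip hρ ha hb
    have ihb := ih (θ / (1 + 2*ρ)) hθ'
    have dbd := gwf_phie hρ hθ
    rw [e1]
    have tri := abs_sub_le (gwf ρ ((gwf ρ)^[n] (Real.exp (-((θ / (1 + 2*ρ)) * (((1 + 2*ρ) ^ n)⁻¹))))))
      (gwf ρ ((1 + θ / (1 + 2*ρ))⁻¹)) ((1 + θ)⁻¹)
    have step1 : |gwf ρ ((gwf ρ)^[n] (Real.exp (-((θ / (1 + 2*ρ)) * (((1 + 2*ρ) ^ n)⁻¹))))) - gwf ρ ((1 + θ / (1 + 2*ρ))⁻¹)|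
        ≤ (1 + 2*ρ) * ((1/2 * ((1 + 2*ρ)⁻¹) ^ n + ρ / (1 + 2*ρ)) * (θ / (1 + 2*ρ)) ^ 2) :=
      key.trans (by nlinarith [abs_nonneg ((gwf ρ)^[n] (Real.exp (-((θ / (1 + 2*ρ)) * (((1 + 2*ρ) ^ n)⁻¹)))) - (1 + θ / (1 + 2*ρ))⁻¹)])
    have alg : (1 + 2*ρ) * ((1/2 * ((1 + 2*ρ)⁻¹) ^ n + ρ / (1 + 2*ρ)) * (θ / (1 + 2*ρ)) ^ 2)
        + 2 * ρ ^ 2 / (1 + 2 * ρ) ^ 2 * θ ^ 2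
        = (1/2 * ((1 + 2*ρ)⁻¹) ^ (n+1) + ρ / (1 + 2*ρ)) * θ ^ 2 := by
      have hcn : ((1 + 2*ρ):ℝ) ^ n ≠ 0 := pow_ne_zero _ (ne_of_gt hc0)
      rw [inv_pow, inv_pow]
      field_simp
      ring
    linarith


lemma pois_lint {ρ : ℝ} (hρ : 0 < ρ) {u : ℝ} (hu : u ∈ Set.Icc (0:ℝ) 1) :
    ∫⁻ x, ENNReal.ofReal (u ^ x) ∂(((poissonPMF (2 * ρ).toNNReal).map (· + 1)).toMeasure)
      = ENNReal.ofReal (gwf ρ u) := by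
  obtain ⟨hu0, hu1⟩ := hu
  set lam : ℝ≥0 := (2 * ρ).toNNReal with hlam
  have hlamr : (lam : ℝ) = 2 * ρ := Real.coe_toNNReal (2 * ρ) (by linarith)
  have hmap := PMF.toMeasure_map (poissonPMF lam) (f := fun x : ℕ => x + 1) Measurable.of_discrete
  rw [← hmap, lintegral_map Measurable.of_discrete Measurable.of_discrete]
  rw [lintegral_countable' (μ := (poissonPMF lam).toMeasure)]
  have hsing : ∀ k : ℕ, (poissonPMF lam).toMeasure {k} = ENNReal.ofReal (poissonPMFReal lam k) := by
    intro k
    rw [PMF.toMeasure_apply_singleton _ _ (measurableSet_singleton k)]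
    rfl
  have hterm : ∀ k : ℕ, ENNReal.ofReal (u ^ (k + 1)) * (poissonPMF lam).toMeasure {k}
      = ENNReal.ofReal (u ^ (k + 1) * poissonPMFReal lam k) := by
    intro k
    rw [hsing k, ← ENNReal.ofReal_mul (by positivity)]
  calc ∑' k : ℕ, ENNReal.ofReal (u ^ (k + 1)) * (poissonPMF lam).toMeasure {k}
      = ∑' k : ℕ, ENNReal.ofReal (u ^ (k + 1) * poissonPMFReal lam k) := tsum_congr hterm
    _ = ENNReal.ofReal (∑' k : ℕ, u ^ (k + 1) * poissonPMFReal lam k) := by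
        rw [← ENNReal.ofReal_tsum_of_nonneg]
        · intro k
          have := poissonPMFReal_nonneg (r := lam) (n := k)
          positivity
        · unfold poissonPMFReal
          apply Summable.of_nonneg_of_le
            (fun k => by have := poissonPMFReal_nonneg (r := lam) (n := k); positivity)
            (fun k => ?_)
            (((Real.summable_pow_div_factorial ((lam : ℝ))).mul_left (Real.exp (-(lam : ℝ)))))
          calc u ^ (k+1) * (Real.exp (-(lam:ℝ)) * (lam:ℝ) ^ k / k.factorial)
              ≤ 1 * (Real.exp (-(lam:ℝ)) * (lam:ℝ) ^ k / k.factorial) := by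
                apply mul_le_mul_of_nonneg_right (pow_le_one₀ hu0 hu1)
                have : (0:ℝ) ≤ (lam:ℝ) := lam.coe_nonneg
                positivity
            _ = Real.exp (-(lam:ℝ)) * ((lam:ℝ) ^ k / k.factorial) := by ring
    _ = ENNReal.ofReal (gwf ρ u) := by
        congr 1
        unfold poissonPMFReal
        have hsum : ∑' k : ℕ, u ^ (k + 1) * (Real.exp (-(lam:ℝ)) * (lam:ℝ) ^ k / k.factorial)
            = u * Real.exp (-(lam:ℝ)) * ∑' k : ℕ, ((lam:ℝ) * u) ^ k / k.factorial := by
          rw [← tsum_mul_left]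
          apply tsum_congr
          intro k
          rw [mul_pow, pow_succ]
          ring
        rw [hsum]
        have hexp : ∑' k : ℕ, ((lam:ℝ) * u) ^ k / k.factorial = Real.exp ((lam:ℝ) * u) := by
          rw [Real.exp_eq_exp_ℝ, NormedSpace.exp_eq_tsum_div]
        rw [hexp]
        unfold gwf
        rw [hlamr, mul_assoc, ← Real.exp_add]
        ring_nf


lemma meas_rand_sum {Ω : Type*} {m' : MeasurableSpace Ω} {f : Ω → ℕ} {g : ℕ → Ω → ℕ}
    (hf : Measurable[m'] f) (hg : ∀ k, Measurable[m'] (g k)) :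
    Measurable[m'] fun ω => g (f ω) ω := by
  apply measurable_to_countable'
  intro k
  have h : (fun ω => g (f ω) ω) ⁻¹' {k} = ⋃ m : ℕ, (f ⁻¹' {m}) ∩ ((g m) ⁻¹' {k}) := by
    ext ω
    simp only [Set.mem_preimage, Set.mem_singleton_iff, Set.mem_iUnion, Set.mem_inter_iff]
    constructor
    · intro hh; exact ⟨f ω, rfl, hh⟩
    · rintro ⟨m, rfl, hh⟩; exact hh
  rw [h]
  exact MeasurableSet.iUnion fun m =>
    (hf (measurableSet_singleton m)).inter (hg m (measurableSet_singleton k))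

section GWAux

variable {Ω : Type*} [MeasurableSpace Ω] {μ : Measure Ω} [IsProbabilityMeasure μ]
  {ρ : ℝ} {X : ℕ → ℕ → Ω → ℕ} {M : ℕ → Ω → ℕ}

lemma gw_lintegral (hρ : 0 < ρ)
    (hXm : ∀ n i, Measurable (X n i))
    (hindep : iIndepFun (fun p : ℕ × ℕ => X p.1 p.2) μ)
    (hXd : ∀ n i, μ.map (X n i) = ((poissonPMF (2 * ρ).toNNReal).map (· + 1)).toMeasure)
    (hM0 : ∀ ω, M 0 ω = 1)
    (hMrec : ∀ n ω, M (n + 1) ω = ∑ i ∈ Finset.range (M n ω), X n i ω) :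
    ∀ n : ℕ, ∀ u ∈ Set.Icc (0:ℝ) 1,
      ∫⁻ ω, ENNReal.ofReal (u ^ M n ω) ∂μ = ENNReal.ofReal ((gwf ρ)^[n] u) := by
  classical
  set cm : ℕ × ℕ → MeasurableSpace Ω :=
    fun p => MeasurableSpace.comap (X p.1 p.2) inferInstance with hcm
  have h_le : ∀ p : ℕ × ℕ, cm p ≤ ‹MeasurableSpace Ω› :=
    fun p => measurable_iff_comap_le.mp (hXm p.1 p.2)
  have hXm' : ∀ p : ℕ × ℕ, Measurable[cm p] (X p.1 p.2) :=
    fun p => Measurable.of_comap_le le_rfl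
  -- measurability of M n w.r.t. the σ-algebra of levels < n
  have hMm' : ∀ n, Measurable[⨆ p ∈ {p : ℕ × ℕ | p.1 < n}, cm p] (M n) := by
    intro n
    induction n with
    | zero =>
      have h0 : M 0 = fun _ => 1 := funext hM0
      rw [h0]; exact measurable_const
    | succ n ih =>
      have hle1 : (⨆ p ∈ {p : ℕ × ℕ | p.1 < n}, cm p)
          ≤ ⨆ p ∈ {p : ℕ × ℕ | p.1 < n + 1}, cm p :=
        biSup_mono fun p hp => Nat.lt_succ_of_lt hp
      have hM : Measurable[⨆ p ∈ {p : ℕ × ℕ | p.1 < n + 1}, cm p] (M n) := ih.mono hle1 le_rfl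
      have hXk : ∀ i, Measurable[⨆ p ∈ {p : ℕ × ℕ | p.1 < n + 1}, cm p] (X n i) := fun i =>
        (hXm' (n, i)).mono (le_biSup cm (show ((n, i) : ℕ × ℕ) ∈ {p : ℕ × ℕ | p.1 < n + 1} from Nat.lt_succ_self n)) le_rfl
      have hsum : ∀ k, Measurable[⨆ p ∈ {p : ℕ × ℕ | p.1 < n + 1}, cm p]
          fun ω => ∑ i ∈ Finset.range k, X n i ω := fun k =>
        Finset.measurable_sum _ fun i _ => hXk i
      have hrw : M (n + 1) = fun ω => ∑ i ∈ Finset.range (M n ω), X n i ω := funext (hMrec n)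
      rw [hrw]
      exact meas_rand_sum hM hsum
  have hMmeas : ∀ n, Measurable (M n) :=
    fun n => (hMm' n).mono (iSup₂_le fun p _ => h_le p) le_rfl
  -- the single-variable integral
  have hsingle : ∀ (n i : ℕ) (u : ℝ), u ∈ Set.Icc (0:ℝ) 1 →
      ∫⁻ ω, ENNReal.ofReal (u ^ X n i ω) ∂μ = ENNReal.ofReal (gwf ρ u) := by
    intro n i u hu
    have hmap := lintegral_map (μ := μ) (f := fun x : ℕ => ENNReal.ofReal (u ^ x))
      Measurable.of_discrete (hXm n i)
    rw [← hmap, hXd n i, pois_lint hρ hu]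
  -- product over an initial segment of one level
  have hprod : ∀ (n m : ℕ) (u : ℝ), u ∈ Set.Icc (0:ℝ) 1 →
      ∫⁻ ω, ∏ i ∈ Finset.range m, ENNReal.ofReal (u ^ X n i ω) ∂μ
        = ENNReal.ofReal (gwf ρ u) ^ m := by
    intro n m u hu
    induction m with
    | zero => simp
    | succ m ih =>
      have hInd : Indep (⨆ p ∈ {p : ℕ × ℕ | p.1 = n ∧ p.2 < m}, cm p)
          (⨆ p ∈ ({(n, m)} : Set (ℕ × ℕ)), cm p) μ := by
        apply indep_iSup_of_disjoint h_le hindep.iIndep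
        rw [Set.disjoint_left]
        rintro ⟨a, b⟩ hp hq
        simp only [Set.mem_singleton_iff, Prod.mk.injEq] at hq
        obtain ⟨rfl, rfl⟩ := hq
        exact absurd hp.2 (lt_irrefl _)
      have hmf : Measurable[⨆ p ∈ {p : ℕ × ℕ | p.1 = n ∧ p.2 < m}, cm p]
          fun ω => ∏ i ∈ Finset.range m, ENNReal.ofReal (u ^ X n i ω) := by
        apply Finset.measurable_prod
        intro i hi
        exact ((Measurable.of_discrete (f := fun k : ℕ => ENNReal.ofReal (u ^ k))).comp
          (hXm' (n, i))).mono
          (le_biSup cm (show ((n, i) : ℕ × ℕ) ∈ {p : ℕ × ℕ | p.1 = n ∧ p.2 < m} from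
            ⟨rfl, Finset.mem_range.mp hi⟩)) le_rfl
      have hmg : Measurable[⨆ p ∈ ({(n, m)} : Set (ℕ × ℕ)), cm p]
          fun ω => ENNReal.ofReal (u ^ X n m ω) := by
        refine ((Measurable.of_discrete (f := fun k : ℕ => ENNReal.ofReal (u ^ k))).comp
          (hXm' (n, m))).mono (le_biSup cm rfl) le_rfl
      have key := lintegral_mul_eq_lintegral_mul_lintegral_of_independent_measurableSpace
        (iSup₂_le fun p _ => h_le p) (iSup₂_le fun p _ => h_le p) hInd hmf hmg
      simp_rw [Finset.prod_range_succ]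
      rw [key, ih, hsingle n m u hu, pow_succ]
  -- one-step recursion
  have hrec : ∀ (n : ℕ) (u : ℝ), u ∈ Set.Icc (0:ℝ) 1 →
      ∫⁻ ω, ENNReal.ofReal (u ^ M (n + 1) ω) ∂μ
        = ∫⁻ ω, ENNReal.ofReal ((gwf ρ u) ^ M n ω) ∂μ := by
    intro n u hu
    have hgu := gwf_mem hρ hu
    have hpt : ∀ ω, ENNReal.ofReal (u ^ M (n + 1) ω)
        = ∑' m : ℕ, ((M n) ⁻¹' {m}).indicator (1 : Ω → ℝ≥0∞) ω
            * ∏ i ∈ Finset.range m, ENNReal.ofReal (u ^ X n i ω) := by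
      intro ω
      rw [tsum_eq_single (M n ω) ?_]
      · rw [Set.indicator_of_mem (by simp : ω ∈ (M n) ⁻¹' {M n ω})]
        simp only [Pi.one_apply, one_mul]
        have h1 : u ^ M (n + 1) ω = ∏ i ∈ Finset.range (M n ω), u ^ X n i ω := by
          rw [hMrec n ω, Finset.prod_pow_eq_pow_sum]
        rw [h1, ENNReal.ofReal_prod_of_nonneg fun i _ => pow_nonneg hu.1 _]
      · intro m hm
        rw [Set.indicator_of_notMem (by simpa using Ne.symm hm), zero_mul]
    rw [lintegral_congr hpt]
    have hfac : ∀ (k i : ℕ), Measurable fun ω => ENNReal.ofReal (u ^ X k i ω) :=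
      fun k i => (Measurable.of_discrete (f := fun k : ℕ => ENNReal.ofReal (u ^ k))).comp (hXm k i)
    have hmeas_m : ∀ m : ℕ, Measurable fun ω => ((M n) ⁻¹' {m}).indicator (1 : Ω → ℝ≥0∞) ω
        * ∏ i ∈ Finset.range m, ENNReal.ofReal (u ^ X n i ω) :=
      fun m => (measurable_one.indicator (hMmeas n (measurableSet_singleton m))).mul
        (Finset.measurable_prod _ fun i _ => hfac n i)
    rw [lintegral_tsum fun m => (hmeas_m m).aemeasurable]
    have hterm : ∀ m : ℕ,
        ∫⁻ ω, ((M n) ⁻¹' {m}).indicator (1 : Ω → ℝ≥0∞) ω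
            * ∏ i ∈ Finset.range m, ENNReal.ofReal (u ^ X n i ω) ∂μ
          = μ ((M n) ⁻¹' {m}) * ENNReal.ofReal ((gwf ρ u) ^ m) := by
      intro m
      have hInd : Indep (⨆ p ∈ {p : ℕ × ℕ | p.1 < n}, cm p)
          (⨆ p ∈ {p : ℕ × ℕ | p.1 = n}, cm p) μ := by
        apply indep_iSup_of_disjoint h_le hindep.iIndep
        rw [Set.disjoint_left]
        rintro ⟨a, b⟩ hp hq
        simp only [Set.mem_setOf_eq] at hp hq
        omega
      have hmf : Measurable[⨆ p ∈ {p : ℕ × ℕ | p.1 < n}, cm p]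
          (((M n) ⁻¹' {m}).indicator (1 : Ω → ℝ≥0∞)) :=
        (@measurable_const ℝ≥0∞ Ω _ (⨆ p ∈ {p : ℕ × ℕ | p.1 < n}, cm p) 1).indicator
          (hMm' n (measurableSet_singleton m))
      have hmg : Measurable[⨆ p ∈ {p : ℕ × ℕ | p.1 = n}, cm p]
          fun ω => ∏ i ∈ Finset.range m, ENNReal.ofReal (u ^ X n i ω) := by
        apply Finset.measurable_prod
        intro i _
        exact ((Measurable.of_discrete (f := fun k : ℕ => ENNReal.ofReal (u ^ k))).comp
          (hXm' (n, i))).mono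
          (le_biSup cm (show ((n, i) : ℕ × ℕ) ∈ {p : ℕ × ℕ | p.1 = n} from rfl)) le_rfl
      rw [lintegral_mul_eq_lintegral_mul_lintegral_of_independent_measurableSpace
        (iSup₂_le fun p _ => h_le p) (iSup₂_le fun p _ => h_le p) hInd hmf hmg]
      rw [lintegral_indicator_one (hMmeas n (measurableSet_singleton m)), hprod n m u hu]
      rw [ENNReal.ofReal_pow hgu.1]
    rw [tsum_congr hterm]
    have hback : ∫⁻ ω, ENNReal.ofReal ((gwf ρ u) ^ M n ω) ∂μ
        = ∑' m : ℕ, μ ((M n) ⁻¹' {m}) * ENNReal.ofReal ((gwf ρ u) ^ m) := by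
      have hmap2 := lintegral_map (μ := μ) (f := fun k : ℕ => ENNReal.ofReal (gwf ρ u ^ k))
        Measurable.of_discrete (hMmeas n)
      rw [← hmap2, lintegral_countable']
      apply tsum_congr
      intro m
      rw [Measure.map_apply (hMmeas n) (measurableSet_singleton m), mul_comm]
    rw [hback]
  -- main induction
  intro n
  induction n with
  | zero =>
    intro u hu
    simp only [Function.iterate_zero, id]
    have h0 : ∀ ω, ENNReal.ofReal (u ^ M 0 ω) = ENNReal.ofReal u := by
      intro ω; rw [hM0 ω, pow_one]
    rw [lintegral_congr h0, lintegral_const, measure_univ, mul_one]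
  | succ n ih =>
    intro u hu
    rw [hrec n u hu, ih (gwf ρ u) (gwf_mem hρ hu), ← Function.iterate_succ_apply]


end GWAux

/-- The Laplace transform `φ_ρ(θ) = E[e^{-θ W_ρ}]` of the martingale limit
`W_ρ` of the Galton–Watson process with offspring `1 + Poisson(2ρ)` satisfies
`sup_{θ>0} θ⁻²|φ_ρ(θ) - (1+θ)⁻¹| ≤ ρ/(1+2ρ)`, stated pointwise. -/
theorem gw_limit_laplace_close_to_exp (Ω : Type*) [MeasurableSpace Ω] (μ : Measure Ω)
    [IsProbabilityMeasure μ] (ρ : ℝ) (hρ : 0 < ρ)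
    (X : ℕ → ℕ → Ω → ℕ) (M : ℕ → Ω → ℕ)
    (hXm : ∀ n i, Measurable (X n i))
    (hindep : iIndepFun (fun p : ℕ × ℕ => X p.1 p.2) μ)
    (hXd : ∀ n i, μ.map (X n i) =
      ((poissonPMF (2 * ρ).toNNReal).map (· + 1)).toMeasure)
    (hM0 : ∀ ω, M 0 ω = 1)
    (hMrec : ∀ n ω, M (n + 1) ω = ∑ i ∈ Finset.range (M n ω), X n i ω)
    (W : Ω → ℝ) (hWm : Measurable W)
    (hWlim : ∀ᵐ ω ∂μ, Filter.Tendsto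
      (fun n => ((1 + 2 * ρ) ^ n)⁻¹ * (M n ω : ℝ)) Filter.atTop (nhds (W ω))) :
    ∀ θ > 0, |(∫ ω, Real.exp (-θ * W ω) ∂μ) - (1 + θ)⁻¹| ≤
      ρ / (1 + 2 * ρ) * θ ^ 2 := by
  intro θ hθ
  have hc0 : (0:ℝ) < 1 + 2 * ρ := by linarith
  -- measurability of M n
  have hMmeas : ∀ n, Measurable (M n) := by
    intro n
    induction n with
    | zero =>
      have h0 : M 0 = fun _ => 1 := funext hM0
      rw [h0]; exact measurable_const
    | succ n ih =>
      have hrw : M (n + 1) = fun ω => ∑ i ∈ Finset.range (M n ω), X n i ω := funext (hMrec n)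
      rw [hrw]
      exact meas_rand_sum ih fun k => Finset.measurable_sum _ fun i _ => hXm n i
  -- the approximating sequence
  set u : ℕ → ℝ := fun n => Real.exp (-(θ * (((1 + 2*ρ) ^ n)⁻¹))) with hu
  have hun : ∀ n, u n ∈ Set.Icc (0:ℝ) 1 := by
    intro n
    refine ⟨(Real.exp_pos _).le, Real.exp_le_one_iff.mpr ?_⟩
    have : (0:ℝ) ≤ θ * (((1 + 2*ρ) ^ n)⁻¹) := by positivity
    linarith
  set F : ℕ → Ω → ℝ := fun n ω => (u n) ^ M n ω with hF
  have hFmeas : ∀ n, Measurable (F n) :=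
    fun n => (Measurable.of_discrete (f := fun k : ℕ => (u n) ^ k)).comp (hMmeas n)
  -- value of the integral of F n
  have hFint : ∀ n, ∫ ω, F n ω ∂μ = (gwf ρ)^[n] (u n) := by
    intro n
    rw [integral_eq_lintegral_of_nonneg_ae
      (Filter.Eventually.of_forall fun ω => pow_nonneg (hun n).1 _)
      (hFmeas n).aestronglyMeasurable]
    rw [gw_lintegral hρ hXm hindep hXd hM0 hMrec n (u n) (hun n)]
    exact ENNReal.toReal_ofReal (gwf_iter_mem hρ n (hun n)).1
  -- dominated convergence
  have hlim : Filter.Tendsto (fun n => ∫ ω, F n ω ∂μ) Filter.atTop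
      (nhds (∫ ω, Real.exp (-θ * W ω) ∂μ)) := by
    apply MeasureTheory.tendsto_integral_of_dominated_convergence (fun _ => (1:ℝ))
      (fun n => (hFmeas n).aestronglyMeasurable) (integrable_const 1)
    · intro n
      apply Filter.Eventually.of_forall
      intro ω
      have h1 : F n ω = Real.exp ((M n ω : ℝ) * (-(θ * (((1 + 2*ρ) ^ n)⁻¹)))) := by
        rw [hF, hu]
        simp only
        rw [← Real.exp_nat_mul]
      rw [h1, Real.norm_eq_abs, abs_of_pos (Real.exp_pos _)]
      apply Real.exp_le_one_iff.mpr
      have h2 : (0:ℝ) ≤ (M n ω : ℝ) * (θ * (((1 + 2*ρ) ^ n)⁻¹)) := by positivity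
      nlinarith
    · filter_upwards [hWlim] with ω hω
      have h3 : Filter.Tendsto (fun n => -θ * (((1 + 2 * ρ) ^ n)⁻¹ * (M n ω : ℝ)))
          Filter.atTop (nhds (-θ * W ω)) := hω.const_mul (-θ)
      have h4 : ∀ n, F n ω = Real.exp (-θ * (((1 + 2 * ρ) ^ n)⁻¹ * (M n ω : ℝ))) := by
        intro n
        rw [hF, hu]
        simp only
        rw [← Real.exp_nat_mul]
        congr 1
        ring
      simp_rw [h4]
      exact (Real.continuous_exp.tendsto _).comp h3
  -- pass the quantitative bound to the limit
  have habs : Filter.Tendsto (fun n => |(∫ ω, F n ω ∂μ) - (1 + θ)⁻¹|) Filter.atTop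
      (nhds (|(∫ ω, Real.exp (-θ * W ω) ∂μ) - (1 + θ)⁻¹|)) :=
    ((hlim.sub_const _).abs)
  have hBnd : ∀ n, |(∫ ω, F n ω ∂μ) - (1 + θ)⁻¹|
      ≤ (1/2 * ((1 + 2*ρ)⁻¹) ^ n + ρ / (1 + 2*ρ)) * θ ^ 2 := by
    intro n
    rw [hFint n]
    exact gwf_iter_bound hρ n θ hθ
  have hB : Filter.Tendsto (fun n => (1/2 * ((1 + 2*ρ)⁻¹) ^ n + ρ / (1 + 2*ρ)) * θ ^ 2)
      Filter.atTop (nhds (ρ / (1 + 2 * ρ) * θ ^ 2)) := by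
    have h5 : Filter.Tendsto (fun n : ℕ => ((1 + 2*ρ)⁻¹) ^ n) Filter.atTop (nhds 0) := by
      apply tendsto_pow_atTop_nhds_zero_of_lt_one
      · positivity
      · rw [inv_lt_one_iff₀]; right; linarith
    have h6 := ((h5.const_mul (1/2 : ℝ)).add_const (ρ / (1 + 2*ρ))).mul_const (θ ^ 2)
    simpa using h6
  exact le_of_tendsto_of_tendsto' habs hB hBnd
end

section
/- Fix σ > 0, integers k ≥ 1 and Λ ≥ 1 with σ ≤ Λ, and let λ > 1 be the largest root of (t−1)(t−σ) = 2kσ. Define the sequences of functions φ_{1,n}, φ_{2,n} on [0,∞) by φ_{1,0}(θ) = e^{−θ}, φ_{2,0}(θ) = e^{−θ(λ−σ)}, and the Poincaré recursion φ_{1,n+1}(θ) = φ_{2,n}(θ/λ)·((σ/Λ)φ_{1,n}(θ/λ) + 1 − σ/Λ)^Λ, φ_{2,n+1}(θ) = φ_{2,n}(θ/λ)·((σ/Λ)φ_{1,n}(θ/λ) + 1 − σ/Λ)^{2kΛ}. Then for every n ≥ 0 and θ > 0, φ_{1,n}(θ) ≤ 1/(1+θ) and φ_{2,n}(θ) ≤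 1/(1+θ(λ−σ)). -/
set_option maxHeartbeats 1000000

/-- The iterates of the Poincaré recursion for the two-type branching process of
the discrete small-world model, started from the Laplace transforms of the
initial generation, are dominated by `(1+θ)⁻¹` resp. `(1+θ(λ-σ))⁻¹`. -/
theorem poincare_iterates_dominated (σ : ℝ) (hσ : 0 < σ) (k Λ : ℕ)
    (hk : 1 ≤ k) (hΛ : 1 ≤ Λ) (hσΛ : σ ≤ Λ)
    (l : ℝ) (hroot : (l - 1) * (l - σ) = 2 * k * σ) (hl : σ + 1 < l)
    (φ1 φ2 : ℕ → ℝ → ℝ)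
    (h10 : ∀ θ, φ1 0 θ = Real.exp (-θ))
    (h20 : ∀ θ, φ2 0 θ = Real.exp (-(θ * (l - σ))))
    (h1 : ∀ n θ, φ1 (n + 1) θ =
      φ2 n (θ / l) * ((σ / Λ) * φ1 n (θ / l) + 1 - σ / Λ) ^ (Λ : ℕ))
    (h2 : ∀ n θ, φ2 (n + 1) θ =
      φ2 n (θ / l) * ((σ / Λ) * φ1 n (θ / l) + 1 - σ / Λ) ^ (2 * k * Λ)) :
    ∀ n, ∀ θ > 0, φ1 n θ ≤ (1 + θ)⁻¹ ∧ φ2 n θ ≤ (1 + θ * (l - σ))⁻¹ := by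
  have hl0 : (0:ℝ) < l := by linarith
  have hls : 1 < l - σ := by linarith
  have hΛ0 : (0:ℝ) < (Λ:ℝ) := by exact_mod_cast Nat.pos_of_ne_zero (by omega)
  have key : ∀ n, ∀ θ > 0,
      (0 < φ1 n θ ∧ φ1 n θ ≤ (1+θ)⁻¹) ∧ (0 < φ2 n θ ∧ φ2 n θ ≤ (1+θ*(l-σ))⁻¹) := by
    intro n
    induction n with
    | zero =>
      intro θ hθ
      have e1 : (0:ℝ) < θ * (l - σ) := mul_pos hθ (by linarith)
      refine ⟨⟨by rw [h10]; exact Real.exp_pos _, ?_⟩,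
              ⟨by rw [h20]; exact Real.exp_pos _, ?_⟩⟩
      · rw [h10, Real.exp_neg]
        exact inv_anti₀ (by linarith) (by linarith [Real.add_one_le_exp θ])
      · rw [h20, Real.exp_neg]
        exact inv_anti₀ (by linarith)
          (by linarith [Real.add_one_le_exp (θ * (l - σ))])
    | succ n ih =>
      intro θ hθ
      have hx : 0 < θ / l := div_pos hθ hl0
      set x := θ / l with hxdef
      obtain ⟨⟨hp1, hb1⟩, hp2, hb2⟩ := ih x hx
      have hθx : θ = l * x := by rw [hxdef]; field_simp [ne_of_gt hl0]
      have hs : 0 < σ / Λ := div_pos hσ hΛ0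
      have hs1 : σ / Λ ≤ 1 := by rw [div_le_one hΛ0]; exact hσΛ
      set A := (σ/Λ) * φ1 n x + 1 - σ/Λ with hA
      have hA0 : 0 < A := by rw [hA]; nlinarith [mul_pos hs hp1]
      have hx1 : (0:ℝ) < 1 + x := by linarith
      set c := x / (1 + x) with hcdef
      have hc : c * (1 + x) = x := div_mul_cancel₀ x (ne_of_gt hx1)
      have hc0 : 0 ≤ c := le_of_lt (div_pos hx hx1)
      clear_value x A c
      have hAle : A ≤ 1 - (σ/Λ) * c := by
        have h1x : (1+x)⁻¹ = 1 - c := by rw [hcdef]; field_simp; ring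
        nlinarith [mul_le_mul_of_nonneg_left hb1 (le_of_lt hs)]
      have hAexp : A ≤ Real.exp (-((σ/Λ) * c)) := by
        have := Real.add_one_le_exp (-((σ/Λ) * c))
        linarith
      have hpow : ∀ m : ℕ, A ^ m ≤ (1 + (σ/Λ) * m * c)⁻¹ := by
        intro m
        have hmc : 0 ≤ (σ/Λ) * m * c :=
          mul_nonneg (mul_nonneg hs.le (Nat.cast_nonneg m)) hc0
        have h1 : A ^ m ≤ Real.exp (-((σ/Λ) * c)) ^ m :=
          pow_le_pow_left₀ hA0.le hAexp m
        have h2 : Real.exp (-((σ/Λ) * c)) ^ m = Real.exp (-((σ/Λ) * m * c)) := by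
          rw [← Real.exp_nat_mul]; ring_nf
        rw [h2] at h1
        refine h1.trans ?_
        rw [Real.exp_neg]
        exact inv_anti₀ (by linarith)
          (by linarith [Real.add_one_le_exp ((σ/Λ) * m * c)])
      -- φ1 bound
      have hf1 : φ1 (n+1) θ ≤ (1 + x*(l-σ))⁻¹ * (1 + σ * c)⁻¹ := by
        rw [h1, ← hxdef, ← hA]
        have hΛc : (σ/Λ) * (Λ:ℕ) * c = σ * c := by
          field_simp
        have := hpow Λ
        rw [hΛc] at this
        have hApow : 0 ≤ A ^ (Λ:ℕ) := pow_nonneg hA0.le _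
        calc φ2 n x * A ^ (Λ:ℕ) ≤ (1 + x*(l-σ))⁻¹ * A ^ (Λ:ℕ) :=
              mul_le_mul_of_nonneg_right hb2 hApow
          _ ≤ (1 + x*(l-σ))⁻¹ * (1 + σ * c)⁻¹ :=
              mul_le_mul_of_nonneg_left this (by positivity)
      have hf2 : φ2 (n+1) θ ≤ (1 + x*(l-σ))⁻¹ * (1 + 2*k*σ * c)⁻¹ := by
        rw [h2, ← hxdef, ← hA]
        have hΛc : (σ/Λ) * ((2*k*Λ:ℕ):ℝ) * c = 2*k*σ * c := by
          push_cast
          field_simp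
        have := hpow (2*k*Λ)
        rw [hΛc] at this
        have hApow : 0 ≤ A ^ (2*k*Λ) := pow_nonneg hA0.le _
        calc φ2 n x * A ^ (2*k*Λ) ≤ (1 + x*(l-σ))⁻¹ * A ^ (2*k*Λ) :=
              mul_le_mul_of_nonneg_right hb2 hApow
          _ ≤ (1 + x*(l-σ))⁻¹ * (1 + 2*k*σ * c)⁻¹ := by
              apply mul_le_mul_of_nonneg_left this (by positivity)
      have hk1 : (1:ℝ) ≤ (k:ℝ) := by exact_mod_cast hk
      refine ⟨⟨?_, ?_⟩, ?_, ?_⟩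
      · rw [h1, ← hxdef, ← hA]; exact mul_pos hp2 (pow_pos hA0 _)
      · refine hf1.trans ?_
        rw [← mul_inv]
        apply inv_anti₀ (by linarith)
        rw [hθx]
        nlinarith [hc, mul_nonneg (mul_nonneg hσ.le hc0) hx.le, hls]
      · rw [h2, ← hxdef, ← hA]; exact mul_pos hp2 (pow_pos hA0 _)
      · refine hf2.trans ?_
        rw [← mul_inv]
        apply inv_anti₀ (by positivity)
        rw [hθx, ← hroot]
        have ha : x ≤ c + c*x*(l-σ) := by
          nlinarith [hc, mul_nonneg hc0 hx.le]
        have hb : (l-1)*(l-σ)*x ≤ (l-1)*(l-σ)*(c + c*x*(l-σ)) :=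
          mul_le_mul_of_nonneg_left ha (by nlinarith)
        nlinarith [hb]
  intro n θ hθ
  exact ⟨(key n θ hθ).1.2, (key n θ hθ).2.2⟩
end
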